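/- For every integer d ≥ 2 and every ℓ ∈ 𝔤_d* with ℓ(Z_1) ≠ 0, the map from ℝ^{2d} to 𝔤_d* sending (t_1,…,t_d, s_1,…,s_d) to ℓ + ad*_{t_1 Y_1 + t_2 Y_3 + ⋯ + t_d Y_{2d−1} + s_1 X_1 + ⋯ + s_d X_d} ℓ is a bijection from ℝ^{2d} onto the coadjoint orbit {ℓ + ad*_X ℓ : X ∈ 𝔤_d} of ℓ. -/

import Mathlib

/-- The coadjoint action of the Lie algebra: `(coad X f) W = f ⁅W, X⁆`. -/
def coad {L : Type*} [LieRing L] [LieAlgebra ℝ L] (X : L) (f : Module.Dual ℝ L) :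
    Module.Dual ℝ L where
  toFun W := f ⁅W, X⁆
  map_add' a b := by simp [add_lie]
  map_smul' c a := by simp [smul_lie]

/-- The set `{ad*_X ℓ : X ∈ 𝔤, ℓ ∈ 𝔤*}` of all coadjoint tangent vectors. -/
def adStar (L : Type*) [LieRing L] [LieAlgebra ℝ L] : Set (Module.Dual ℝ L) :=
  {g | ∃ (X : L) (ℓ : Module.Dual ℝ L), g = coad X ℓ}

/-- Coordinates of a linear functional with respect to the dual basis of `B`;
this identifies `𝔤*` with `ι → ℝ`, carrying the canonical topology. -/
noncomputable def coords {ι : Type*} {L : Type*} [LieRing L] [LieAlgebra ℝ L]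
    (B : Module.Basis ι ℝ L) (f : Module.Dual ℝ L) : ι → ℝ := fun a => f (B a)

/-- The cortex `Cor(𝔤*)`: the closure (in the canonical topology of the
finite-dimensional space `𝔤*`, transported to coordinates via the dual basis)
of the set `{ad*_X ℓ : X ∈ 𝔤, ℓ ∈ 𝔤*}`. -/
def corSet {ι : Type*} {L : Type*} [LieRing L] [LieAlgebra ℝ L] (B : Module.Basis ι ℝ L) :
    Set (Module.Dual ℝ L) :=
  {f | coords B f ∈ closure (coords B '' adStar L)}

/-- Index type for the basis of `𝔤_d`: first component indexes `Z_1,…,Z_d`, the second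
the odd `Y`'s `Y_1, Y_3, …, Y_{2d-1}`, the third the even `Y`'s `Y_2, Y_4, …, Y_{2d}`,
and the fourth `X_1,…,X_d`. -/
abbrev Idx (d : ℕ) : Type := Fin d ⊕ (Fin d ⊕ (Fin d ⊕ Fin d))

/-- Index of `Z_{i+1}`. -/
def zI {d : ℕ} (i : Fin d) : Idx d := Sum.inl i
/-- Index of `Y_{2i+1}` (odd-indexed `Y`). -/
def yoI {d : ℕ} (i : Fin d) : Idx d := Sum.inr (Sum.inl i)
/-- Index of `Y_{2i+2}` (even-indexed `Y`). -/
def yeI {d : ℕ} (i : Fin d) : Idx d := Sum.inr (Sum.inr (Sum.inl i))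
/-- Index of `X_{i+1}`. -/
def xI {d : ℕ} (i : Fin d) : Idx d := Sum.inr (Sum.inr (Sum.inr i))

/-- Value of `⁅X_{i+1}, Y_{2i+2}⁆`: `Z_{i+2}` if `i + 1 < d`, and `Z_2 + ⋯ + Z_d`
if `i + 1 = d`. -/
def gdW {d : ℕ} (hd : 2 ≤ d) {V : Type*} [AddCommGroup V] (B : Idx d → V) (i : Fin d) : V :=
  if h : (i : ℕ) < d - 1 then B (zI ⟨(i : ℕ) + 1, by omega⟩)
  else ∑ m ∈ Finset.univ.filter (fun m : Fin d => 0 < (m : ℕ)), B (zI m)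

/-- The bracket `⁅B a, B b⁆` of two basis vectors of `𝔤_d`, given by the structure
constants: `⁅X_i, Y_{2i-1}⁆ = Z_1` for `i = 1,…,d`, `⁅X_k, Y_{2k}⁆ = Z_{k+1}` for
`k = 1,…,d-1`, `⁅X_d, Y_{2d}⁆ = Z_2 + ⋯ + Z_d`, all other brackets of basis
vectors being zero (up to antisymmetry). -/
def gdBr {d : ℕ} (hd : 2 ≤ d) {V : Type*} [AddCommGroup V] (B : Idx d → V) :
    Idx d → Idx d → V
  | Sum.inr (Sum.inr (Sum.inr i)), Sum.inr (Sum.inl j) =>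
      if i = j then B (zI ⟨0, by omega⟩) else 0
  | Sum.inr (Sum.inl j), Sum.inr (Sum.inr (Sum.inr i)) =>
      if i = j then -(B (zI ⟨0, by omega⟩)) else 0
  | Sum.inr (Sum.inr (Sum.inr i)), Sum.inr (Sum.inr (Sum.inl j)) =>
      if i = j then gdW hd B i else 0
  | Sum.inr (Sum.inr (Sum.inl j)), Sum.inr (Sum.inr (Sum.inr i)) =>
      if i = j then -(gdW hd B i) else 0
  | _, _ => 0

/-- The homogeneous polynomial `Q_d` of degree `d`, evaluated at the odd coordinates
`ηo` (`ηo i = η_{2i+1}`) and the even coordinates `ηe` (`ηe i = η_{2i+2}`):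
`Q_d = η_{2d-1}·Σ_{i=1}^{d-1}(η_{2i}·∏_{j=1, j≠i}^{d-1} η_{2j-1})
      − η_{2d}·∏_{j=1}^{d-1} η_{2j-1}`. -/
def Qd (d : ℕ) (hd : 2 ≤ d) (ηo ηe : Fin d → ℝ) : ℝ :=
  ηo ⟨d - 1, by omega⟩ *
      (∑ i ∈ Finset.univ.filter (fun i : Fin d => (i : ℕ) < d - 1),
        ηe i * ∏ j ∈ Finset.univ.filter (fun j : Fin d => (j : ℕ) < d - 1 ∧ j ≠ i), ηo j)
    - ηe ⟨d - 1, by omega⟩ *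
        ∏ j ∈ Finset.univ.filter (fun j : Fin d => (j : ℕ) < d - 1), ηo j

lemma my_lie_sum {L : Type*} [LieRing L] {ι : Type*} (x : L) (s : Finset ι) (f : ι → L) :
    ⁅x, ∑ i ∈ s, f i⁆ = ∑ i ∈ s, ⁅x, f i⁆ := by
  induction s using Finset.cons_induction with
  | empty => simp
  | cons a s ha ih => simp [Finset.sum_cons, lie_add, ih]

section Aux

variable {d : ℕ} (hd : 2 ≤ d) {L : Type} [LieRing L] [LieAlgebra ℝ L]
  (B : Module.Basis (Idx d) ℝ L)
  (ℓ : Module.Dual ℝ L)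

lemma coad_eval (hbr : ∀ a b : Idx d, ⁅B a, B b⁆ = gdBr hd (fun c => B c) a b) (X : L) (a : Idx d) :
    coad X ℓ (B a) = ∑ b : Idx d, B.repr X b * ℓ (gdBr hd (fun c => B c) a b) := by
  have hX : X = ∑ b : Idx d, B.repr X b • B b := (B.sum_repr X).symm
  show ℓ ⁅B a, X⁆ = _
  conv_lhs => rw [hX]
  rw [my_lie_sum, map_sum]
  refine Finset.sum_congr rfl fun b _ => ?_
  rw [lie_smul, map_smul, hbr, smul_eq_mul]

lemma coad_eval_param (hbr : ∀ a b : Idx d, ⁅B a, B b⁆ = gdBr hd (fun c => B c) a b) (t s : Fin d → ℝ) (a : Idx d) :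
    coad (∑ i : Fin d, t i • B (yoI i) + ∑ k : Fin d, s k • B (xI k)) ℓ (B a)
      = (∑ i : Fin d, t i * ℓ (gdBr hd (fun c => B c) a (yoI i)))
        + ∑ k : Fin d, s k * ℓ (gdBr hd (fun c => B c) a (xI k)) := by
  show ℓ ⁅B a, _⁆ = _
  rw [lie_add, my_lie_sum, my_lie_sum, map_add, map_sum, map_sum]
  congr 1 <;> refine Finset.sum_congr rfl fun b _ => ?_ <;>
    rw [lie_smul, map_smul, hbr, smul_eq_mul]

end Aux

section GdBr
variable {d : ℕ} (hd : 2 ≤ d) {V : Type*} [AddCommGroup V] (B : Idx d → V)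

@[simp] lemma gdBr_x_yo (i j : Fin d) :
    gdBr hd B (Sum.inr (Sum.inr (Sum.inr i))) (Sum.inr (Sum.inl j))
      = if i = j then B (zI ⟨0, by omega⟩) else 0 := rfl
@[simp] lemma gdBr_yo_x (i j : Fin d) :
    gdBr hd B (Sum.inr (Sum.inl j)) (Sum.inr (Sum.inr (Sum.inr i)))
      = if i = j then -(B (zI ⟨0, by omega⟩)) else 0 := rfl
@[simp] lemma gdBr_x_ye (i j : Fin d) :
    gdBr hd B (Sum.inr (Sum.inr (Sum.inr i))) (Sum.inr (Sum.inr (Sum.inl j)))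
      = if i = j then gdW hd B i else 0 := rfl
@[simp] lemma gdBr_ye_x (i j : Fin d) :
    gdBr hd B (Sum.inr (Sum.inr (Sum.inl j))) (Sum.inr (Sum.inr (Sum.inr i)))
      = if i = j then -(gdW hd B i) else 0 := rfl
@[simp] lemma gdBr_x_x (i j : Fin d) :
    gdBr hd B (Sum.inr (Sum.inr (Sum.inr i))) (Sum.inr (Sum.inr (Sum.inr j))) = 0 := rfl
@[simp] lemma gdBr_yo_yo (i j : Fin d) :
    gdBr hd B (Sum.inr (Sum.inl i)) (Sum.inr (Sum.inl j)) = 0 := rfl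
@[simp] lemma gdBr_yo_ye (i j : Fin d) :
    gdBr hd B (Sum.inr (Sum.inl i)) (Sum.inr (Sum.inr (Sum.inl j))) = 0 := rfl
@[simp] lemma gdBr_ye_yo (i j : Fin d) :
    gdBr hd B (Sum.inr (Sum.inr (Sum.inl i))) (Sum.inr (Sum.inl j)) = 0 := rfl
@[simp] lemma gdBr_ye_ye (i j : Fin d) :
    gdBr hd B (Sum.inr (Sum.inr (Sum.inl i))) (Sum.inr (Sum.inr (Sum.inl j))) = 0 := rfl
@[simp] lemma gdBr_z_left (i : Fin d) (b : Idx d) : gdBr hd B (Sum.inl i) b = 0 := by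
  rcases b with _ | (_ | (_ | _)) <;> rfl
@[simp] lemma gdBr_z_right (i : Fin d) (b : Idx d) : gdBr hd B b (Sum.inl i) = 0 := by
  rcases b with _ | (_ | (_ | _)) <;> rfl

end GdBr

/-- For every `d ≥ 2` and every `ℓ ∈ 𝔤_d*` with `ℓ(Z_1) ≠ 0`, the map
`(t,s) ↦ ℓ + ad*_{t_1 Y_1 + … + t_d Y_{2d−1} + s_1 X_1 + … + s_d X_d} ℓ` is a bijection
from `ℝ^{2d}` onto the coadjoint orbit `{ℓ + ad*_X ℓ : X ∈ 𝔤_d}` of `ℓ`. -/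
theorem orbit_parametrization_gd (d : ℕ) (hd : 2 ≤ d) (L : Type) [LieRing L]
    [LieAlgebra ℝ L] (B : Module.Basis (Idx d) ℝ L)
    (hbr : ∀ a b : Idx d, ⁅B a, B b⁆ = gdBr hd (fun c => B c) a b)
    (ℓ : Module.Dual ℝ L) (hℓ : ℓ (B (zI ⟨0, by omega⟩)) ≠ 0) :
    Set.BijOn
      (fun ts : (Fin d → ℝ) × (Fin d → ℝ) =>
        ℓ + coad (∑ i : Fin d, ts.1 i • B (yoI i) + ∑ k : Fin d, ts.2 k • B (xI k)) ℓ)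
      Set.univ {g : Module.Dual ℝ L | ∃ X : L, g = ℓ + coad X ℓ} := by
  have hℓ' : ℓ (B (zI (⟨0, by omega⟩ : Fin d))) ≠ 0 := hℓ
  refine ⟨fun ts _ => ⟨_, rfl⟩, ?_, ?_⟩
  · -- injectivity
    intro p _ q _ h
    have hc : coad (∑ i : Fin d, p.1 i • B (yoI i) + ∑ k : Fin d, p.2 k • B (xI k)) ℓ
        = coad (∑ i : Fin d, q.1 i • B (yoI i) + ∑ k : Fin d, q.2 k • B (xI k)) ℓ :=
      add_left_cancel h
    have h2 : ∀ i : Fin d, p.2 i = q.2 i := by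
      intro i
      have hi := congrArg (fun f => f (B (yoI i))) hc
      simp only [coad_eval_param hd B ℓ hbr] at hi
      simp only [yoI, xI, gdBr_yo_yo, gdBr_yo_x, map_zero, mul_zero, Finset.sum_const_zero,
        zero_add, apply_ite ℓ, map_neg, mul_ite, mul_neg, Finset.sum_ite_eq', Finset.mem_univ,
        if_true, neg_inj] at hi
      exact mul_right_cancel₀ hℓ' hi
    have h1 : ∀ i : Fin d, p.1 i = q.1 i := by
      intro i
      have hi := congrArg (fun f => f (B (xI i))) hc
      simp only [coad_eval_param hd B ℓ hbr] at hi
      simp only [yoI, xI, gdBr_x_yo, gdBr_x_x, map_zero, mul_zero, Finset.sum_const_zero,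
        add_zero, apply_ite ℓ, mul_ite, Finset.sum_ite_eq, Finset.mem_univ, if_true] at hi
      exact mul_right_cancel₀ hℓ' hi
    exact Prod.ext (funext h1) (funext h2)
  · -- surjectivity
    rintro g ⟨X, rfl⟩
    refine ⟨(fun i => B.repr X (yoI i)
        + B.repr X (yeI i) * (ℓ (gdW hd (fun x => B x) i) / ℓ (B (zI ⟨0, by omega⟩))),
      fun k => B.repr X (xI k)), trivial, ?_⟩
    have key : coad (∑ i : Fin d, (B.repr X (yoI i)
          + B.repr X (yeI i) * (ℓ (gdW hd (fun x => B x) i) / ℓ (B (zI ⟨0, by omega⟩)))) • B (yoI i)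
        + ∑ k : Fin d, B.repr X (xI k) • B (xI k)) ℓ = coad X ℓ := by
      refine B.ext fun a => ?_
      rw [coad_eval_param hd B ℓ hbr, coad_eval hd B ℓ hbr]
      rcases a with i | (i | (i | i))
      · simp [yoI, xI]
      · simp [Fintype.sum_sum_type, yoI, xI, yeI, apply_ite ℓ, mul_ite]
      · simp [Fintype.sum_sum_type, yoI, xI, yeI, apply_ite ℓ, mul_ite]
      · simp only [Fintype.sum_sum_type, yoI, xI, yeI, gdBr_x_yo, gdBr_x_ye, gdBr_x_x,
          gdBr_z_right, map_zero, mul_zero, Finset.sum_const_zero, add_zero, zero_add,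
          apply_ite ℓ, mul_ite, Finset.sum_ite_eq, Finset.mem_univ, if_true]
        field_simp
    simpa using congrArg (fun f => ℓ + f) key
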